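/- arXiv:0807.1023 — 5 statements merged into one kernel-verified Lean document; each statement's English description precedes it below -/
import Mathlib

section
/- Let A be a ring, h a central element of A, and J a two-sided ideal of A. Assume that ab − ba ∈ hA for all a, b ∈ A and that xy − yx ∈ hJ for all x, y ∈ J. Then for all integers i, j ≥ 0 with i + j ≥ 1 and all x ∈ J^i, y ∈ J^j one has xy − yx ∈ h·J^{i+j−1} (with the convention J^0 = A). -/
open scoped Pointwise
open Polynomial

section PowSet

variable {A : Type*} [Ring A]

/-- The `n`-th power of a (two-sided) ideal `J` of a ring `A`, with the convention `J ^ 0 = A`,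
realized as an additive subgroup of `A`. -/
def powSet (J : Ideal A) : ℕ → AddSubgroup A
  | 0 => ⊤
  | 1 => J.toAddSubgroup
  | n + 2 => AddSubgroup.closure ((J : Set A) * (powSet J (n + 1) : Set A))

theorem powSet_succ_succ (J : Ideal A) (n : ℕ) :
    powSet J (n + 2) = AddSubgroup.closure ((J : Set A) * (powSet J (n + 1) : Set A)) := rfl

theorem powSet_mul_mem_left (J : Ideal A) :
    ∀ (n : ℕ) (a : A) {x : A}, x ∈ powSet J n → a * x ∈ powSet J n
  | 0, a, x, _ => AddSubgroup.mem_top _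
  | 1, a, x, hx => J.mul_mem_left a hx
  | n + 2, a, x, hx => by
    induction hx using AddSubgroup.closure_induction with
    | mem z hz =>
      obtain ⟨u, hu, v, hv, rfl⟩ := hz
      exact AddSubgroup.subset_closure
        ⟨a * u, J.mul_mem_left a hu, v, hv, mul_assoc a u v⟩
    | zero => simpa using (powSet J (n + 2)).zero_mem
    | add x y hx hy ihx ihy => simpa [mul_add] using add_mem ihx ihy
    | neg x hx ihx => simpa [mul_neg] using neg_mem ihx

theorem powSet_mul_mem_right (J : Ideal A) (hJ : ∀ x ∈ J, ∀ a : A, x * a ∈ J) :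
    ∀ (n : ℕ) (a : A) {x : A}, x ∈ powSet J n → x * a ∈ powSet J n
  | 0, a, x, _ => AddSubgroup.mem_top _
  | 1, a, x, hx => hJ x hx a
  | n + 2, a, x, hx => by
    induction hx using AddSubgroup.closure_induction with
    | mem z hz =>
      obtain ⟨u, hu, v, hv, rfl⟩ := hz
      exact AddSubgroup.subset_closure
        ⟨u, hu, v * a, powSet_mul_mem_right J hJ (n + 1) a hv, (mul_assoc u v a).symm⟩
    | zero => simpa using (powSet J (n + 2)).zero_mem
    | add x y hx hy ihx ihy => simpa [add_mul] using add_mem ihx ihy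
    | neg x hx ihx => simpa [neg_mul] using neg_mem ihx

theorem powSet_mul_mem (J : Ideal A) (hJ : ∀ x ∈ J, ∀ a : A, x * a ∈ J) :
    ∀ (i j : ℕ) {x y : A}, x ∈ powSet J i → y ∈ powSet J j → x * y ∈ powSet J (i + j)
  | 0, j, x, y, _, hy => by simpa using powSet_mul_mem_left J j x hy
  | 1, 0, x, y, hx, _ => by simpa using powSet_mul_mem_right J hJ 1 y hx
  | 1, j + 1, x, y, hx, hy => by
    rw [show 1 + (j + 1) = j + 2 from by omega, powSet_succ_succ]
    exact AddSubgroup.subset_closure ⟨x, hx, y, hy, rfl⟩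
  | i + 2, j, x, y, hx, hy => by
    rw [show i + 2 + j = (i + j) + 2 from by omega, powSet_succ_succ]
    induction hx using AddSubgroup.closure_induction with
    | mem z hz =>
      obtain ⟨u, hu, v, hv, rfl⟩ := hz
      have hvy : v * y ∈ powSet J (i + 1 + j) := powSet_mul_mem J hJ (i + 1) j hv hy
      rw [show i + 1 + j = i + j + 1 from by omega] at hvy
      exact AddSubgroup.subset_closure ⟨u, hu, v * y, hvy, (mul_assoc u v y).symm⟩
    | zero =>
      simpa using (AddSubgroup.closure ((J : Set A) * (powSet J (i + j + 1) : Set A))).zero_mem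
    | add x₁ x₂ hx₁ hx₂ ih₁ ih₂ => simpa [add_mul] using add_mem ih₁ ih₂
    | neg x₁ hx₁ ih₁ => simpa [neg_mul] using neg_mem ih₁

end PowSet

section Aux

variable {A : Type*} [Ring A] {h : A} {J : Ideal A}

lemma hmul_swap (hcen : ∀ a : A, h * a = a * h) (a w : A) :
    a * (h * w) = h * (a * w) := by
  rw [← mul_assoc, ← hcen, mul_assoc]

lemma comm_split (u v y : A) :
    (u * v) * y - y * (u * v) = u * (v * y - y * v) + (u * y - y * u) * v := by
  noncomm_ring

lemma comm_split' (x u v : A) :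
    x * (u * v) - (u * v) * x = (x * u - u * x) * v + u * (x * v - v * x) := by
  noncomm_ring

lemma comm_L1 (hcen : ∀ a : A, h * a = a * h)
    (hJtwoSided : ∀ x ∈ J, ∀ a : A, x * a ∈ J)
    (hA : ∀ a b : A, ∃ c : A, a * b - b * a = h * c)
    (hJ : ∀ x ∈ J, ∀ y ∈ J, ∃ z ∈ J, x * y - y * x = h * z) :
    ∀ (j : ℕ) (x : A), x ∈ J → ∀ y ∈ powSet J j,
      ∃ z ∈ powSet J j, x * y - y * x = h * z
  | 0, x, hx, y, _ => by
    obtain ⟨c, hc⟩ := hA x y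
    exact ⟨c, AddSubgroup.mem_top _, hc⟩
  | 1, x, hx, y, hy => hJ x hx y hy
  | j + 2, x, hx, y, hy => by
    induction hy using AddSubgroup.closure_induction with
    | mem w hw =>
      obtain ⟨u, hu, v, hv, rfl⟩ := hw
      obtain ⟨z₁, hz₁, e₁⟩ := hJ x hx u hu
      obtain ⟨z₂, hz₂, e₂⟩ := comm_L1 hcen hJtwoSided hA hJ (j + 1) x hx v hv
      refine ⟨z₁ * v + u * z₂, ?_, ?_⟩
      · have h1 := powSet_mul_mem J hJtwoSided 1 (j + 1) hz₁ hv
        have h2 := powSet_mul_mem J hJtwoSided 1 (j + 1) hu hz₂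
        rw [show 1 + (j + 1) = j + 2 from by omega] at h1 h2
        exact add_mem h1 h2
      · rw [comm_split' x u v, e₁, e₂, hmul_swap hcen u z₂, mul_assoc, mul_add]
    | zero => exact ⟨0, (powSet J (j + 2)).zero_mem, by simp⟩
    | add y₁ y₂ hy₁ hy₂ ih₁ ih₂ =>
      obtain ⟨z₁, hz₁, e₁⟩ := ih₁
      obtain ⟨z₂, hz₂, e₂⟩ := ih₂
      refine ⟨z₁ + z₂, add_mem hz₁ hz₂, ?_⟩
      have : x * (y₁ + y₂) - (y₁ + y₂) * x = (x * y₁ - y₁ * x) + (x * y₂ - y₂ * x) := by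
        noncomm_ring
      rw [this, e₁, e₂, mul_add]
    | neg y₁ hy₁ ih₁ =>
      obtain ⟨z₁, hz₁, e₁⟩ := ih₁
      refine ⟨-z₁, neg_mem hz₁, ?_⟩
      have : x * (-y₁) - (-y₁) * x = -(x * y₁ - y₁ * x) := by noncomm_ring
      rw [this, e₁, mul_neg]

lemma comm_L0 (hcen : ∀ a : A, h * a = a * h)
    (hJtwoSided : ∀ x ∈ J, ∀ a : A, x * a ∈ J)
    (hA : ∀ a b : A, ∃ c : A, a * b - b * a = h * c) :
    ∀ (j : ℕ) (x y : A), y ∈ powSet J j →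
      ∃ z ∈ powSet J (j - 1), x * y - y * x = h * z
  | 0, x, y, _ => by
    obtain ⟨c, hc⟩ := hA x y
    exact ⟨c, AddSubgroup.mem_top _, hc⟩
  | 1, x, y, _ => by
    obtain ⟨c, hc⟩ := hA x y
    exact ⟨c, AddSubgroup.mem_top _, hc⟩
  | j + 2, x, y, hy => by
    induction hy using AddSubgroup.closure_induction with
    | mem w hw =>
      obtain ⟨u, hu, v, hv, rfl⟩ := hw
      obtain ⟨c, e₁⟩ := hA x u
      obtain ⟨z₂, hz₂, e₂⟩ := comm_L0 hcen hJtwoSided hA (j + 1) x v hv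
      refine ⟨c * v + u * z₂, ?_, ?_⟩
      · refine add_mem (powSet_mul_mem_left J (j + 1) c hv) ?_
        have := powSet_mul_mem J hJtwoSided 1 j hu hz₂
        rwa [show 1 + j = j + 1 from by omega] at this
      · rw [comm_split' x u v, e₁, e₂, hmul_swap hcen u z₂, mul_assoc, mul_add]
    | zero => exact ⟨0, (powSet J (j + 1)).zero_mem, by simp⟩
    | add y₁ y₂ hy₁ hy₂ ih₁ ih₂ =>
      obtain ⟨z₁, hz₁, e₁⟩ := ih₁
      obtain ⟨z₂, hz₂, e₂⟩ := ih₂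
      refine ⟨z₁ + z₂, add_mem hz₁ hz₂, ?_⟩
      have : x * (y₁ + y₂) - (y₁ + y₂) * x = (x * y₁ - y₁ * x) + (x * y₂ - y₂ * x) := by
        noncomm_ring
      rw [this, e₁, e₂, mul_add]
    | neg y₁ hy₁ ih₁ =>
      obtain ⟨z₁, hz₁, e₁⟩ := ih₁
      refine ⟨-z₁, neg_mem hz₁, ?_⟩
      have : x * (-y₁) - (-y₁) * x = -(x * y₁ - y₁ * x) := by noncomm_ring
      rw [this, e₁, mul_neg]

lemma comm_key (hcen : ∀ a : A, h * a = a * h)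
    (hJtwoSided : ∀ x ∈ J, ∀ a : A, x * a ∈ J)
    (hA : ∀ a b : A, ∃ c : A, a * b - b * a = h * c)
    (hJ : ∀ x ∈ J, ∀ y ∈ J, ∃ z ∈ J, x * y - y * x = h * z) :
    ∀ (i j : ℕ) (x : A), x ∈ powSet J i → ∀ y ∈ powSet J j,
      ∃ z ∈ powSet J (i + j - 1), x * y - y * x = h * z
  | 0, j, x, _, y, hy => by
    have := comm_L0 hcen hJtwoSided hA j x y hy
    rwa [show j - 1 = 0 + j - 1 from by omega] at this
  | 1, j, x, hx, y, hy => by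
    have := comm_L1 hcen hJtwoSided hA hJ j x hx y hy
    rwa [show j = 1 + j - 1 from by omega] at this
  | i + 2, j, x, hx, y, hy => by
    induction hx using AddSubgroup.closure_induction with
    | mem w hw =>
      obtain ⟨u, hu, v, hv, rfl⟩ := hw
      obtain ⟨z₁, hz₁, e₁⟩ := comm_key hcen hJtwoSided hA hJ (i + 1) j v hv y hy
      obtain ⟨z₂, hz₂, e₂⟩ := comm_L1 hcen hJtwoSided hA hJ j u hu y hy
      refine ⟨u * z₁ + z₂ * v, ?_, ?_⟩
      · refine add_mem ?_ ?_
        · have := powSet_mul_mem J hJtwoSided 1 (i + 1 + j - 1) hu hz₁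
          rwa [show 1 + (i + 1 + j - 1) = i + 2 + j - 1 from by omega] at this
        · have := powSet_mul_mem J hJtwoSided j (i + 1) hz₂ hv
          rwa [show j + (i + 1) = i + 2 + j - 1 from by omega] at this
      · rw [comm_split u v y, e₁, e₂, hmul_swap hcen u z₁, mul_assoc, mul_add]
    | zero => exact ⟨0, (powSet J (i + 2 + j - 1)).zero_mem, by simp⟩
    | add x₁ x₂ hx₁ hx₂ ih₁ ih₂ =>
      obtain ⟨z₁, hz₁, e₁⟩ := ih₁
      obtain ⟨z₂, hz₂, e₂⟩ := ih₂
      refine ⟨z₁ + z₂, add_mem hz₁ hz₂, ?_⟩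
      have : (x₁ + x₂) * y - y * (x₁ + x₂) = (x₁ * y - y * x₁) + (x₂ * y - y * x₂) := by
        noncomm_ring
      rw [this, e₁, e₂, mul_add]
    | neg x₁ hx₁ ih₁ =>
      obtain ⟨z₁, hz₁, e₁⟩ := ih₁
      refine ⟨-z₁, neg_mem hz₁, ?_⟩
      have : (-x₁) * y - y * (-x₁) = -(x₁ * y - y * x₁) := by noncomm_ring
      rw [this, e₁, mul_neg]

end Aux

/-- Let `A` be a ring, `h` a central element and `J` a two-sided ideal of `A`.
If `ab - ba ∈ hA` for all `a, b ∈ A` and `xy - yx ∈ hJ` for all `x, y ∈ J`, then for all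
`i, j ≥ 0` with `i + j ≥ 1` and all `x ∈ J^i`, `y ∈ J^j` one has `xy - yx ∈ h·J^{i+j-1}`
(with the convention `J^0 = A`). -/
theorem commutator_mem_smul_powSet {A : Type*} [Ring A] (h : A)
    (hcen : ∀ a : A, h * a = a * h)
    (J : Ideal A) (hJtwoSided : ∀ x ∈ J, ∀ a : A, x * a ∈ J)
    (hA : ∀ a b : A, ∃ c : A, a * b - b * a = h * c)
    (hJ : ∀ x ∈ J, ∀ y ∈ J, ∃ z ∈ J, x * y - y * x = h * z) :
    ∀ i j : ℕ, 1 ≤ i + j → ∀ x ∈ powSet J i, ∀ y ∈ powSet J j,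
      ∃ z ∈ powSet J (i + j - 1), x * y - y * x = h * z := by
  intro i j _ x hx y hy
  exact comm_key hcen hJtwoSided hA hJ i j x hx y hy
end

section
/- Let A be a ring equipped with a decreasing filtration A = F_0 ⊇ F_1 ⊇ F_2 ⊇ ⋯ by additive subgroups such that F_i·F_j ⊆ F_{i+j} for all i, j. Assume the filtration is separated (⋂_n F_n = 0) and complete (the canonical map A → lim_n A/F_n is bijective). If the associated graded ring ⊕_{n≥0} F_n/F_{n+1} (with multiplication induced from that of A) is left Noetherian, then A is left Noetherian. -/
universe u
universe v

set_option synthInstance.maxHeartbeats 1000000 in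
set_option maxHeartbeats 1000000 in
private lemma gradedProj_aux {G : Type v} [AddCommGroup G] (R : ℕ → AddSubgroup G)
    (hint : DirectSum.IsInternal fun n => R n) :
    ∃ π : ℕ → G → G,
      (∀ n a b, π n (a + b) = π n a + π n b) ∧
      (∀ n g, π n g ∈ R n) ∧
      (∀ n m z, z ∈ R m → π n z = if n = m then z else 0) ∧
      (∀ (P : G → Prop), P 0 → (∀ m z, z ∈ R m → P z) →
        (∀ a b, P a → P b → P (a + b)) → ∀ g, P g) := by
  classical
  let e : (DirectSum ℕ fun n => R n) ≃+ G :=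
    AddEquiv.ofBijective (M := DirectSum ℕ fun n => R n) (N := G)
      (DirectSum.coeAddMonoidHom R) hint
  have hecoe : ∀ w, e w = DirectSum.coeAddMonoidHom R w := fun _ => rfl
  refine ⟨fun n g => ((e.symm g) n : G), ?_, ?_, ?_, ?_⟩
  · intro n a b
    dsimp only
    rw [map_add, DirectSum.add_apply, AddSubgroup.coe_add]
  · intro n g
    exact ((e.symm g) n).2
  · intro n m z hz
    have h1 : e (DirectSum.of (fun i => R i) m ⟨z, hz⟩) = z := by
      rw [hecoe]; exact DirectSum.coeAddMonoidHom_of R m ⟨z, hz⟩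
    have h2 : e.symm z = DirectSum.of (fun i => R i) m ⟨z, hz⟩ :=
      (AddEquiv.symm_apply_eq e).mpr h1.symm
    dsimp only
    rw [h2]
    by_cases hnm : n = m
    · subst hnm; rw [DirectSum.of_eq_same, if_pos rfl]
    · rw [DirectSum.of_eq_of_ne _ _ _ hnm, if_neg hnm, ZeroMemClass.coe_zero]
  · intro P h0 hhom hadd g
    obtain ⟨w, rfl⟩ := e.surjective g
    induction w using DirectSum.induction_on with
    | zero => rw [map_zero]; exact h0
    | of i x =>
        have : e (DirectSum.of (fun i => R i) i x) = ↑x := by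
          rw [hecoe]; exact DirectSum.coeAddMonoidHom_of R i x
        rw [this]; exact hhom i _ x.2
    | add x y hx hy => rw [map_add]; exact hadd _ _ hx hy


set_option maxHeartbeats 1000000

/-- Let `A` be a ring with a decreasing, separated and complete multiplicative
filtration `A = F 0 ⊇ F 1 ⊇ ⋯` by additive subgroups. If the associated graded ring
`⊕_{n ≥ 0} F n / F (n+1)` (encoded here by a ring `G` together with the additive symbol maps
`σ n : F n →+ G` which are multiplicative, unital, have kernels `F (n+1)` and whose ranges
decompose `G` as an internal direct sum) is left Noetherian, then `A` is left Noetherian. -/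
theorem isNoetherianRing_of_gradedNoetherian {A : Type u} [Ring A]
    (F : ℕ → AddSubgroup A)
    (hF0 : F 0 = ⊤)
    (hdec : ∀ n : ℕ, F (n + 1) ≤ F n)
    (hmul : ∀ i j : ℕ, ∀ x ∈ F i, ∀ y ∈ F j, x * y ∈ F (i + j))
    -- separated:
    (hsep : (⨅ n : ℕ, F n) = ⊥)
    -- complete:
    (hcomplete : ∀ f : ℕ → A, (∀ n : ℕ, f (n + 1) - f n ∈ F n) →
      ∃ a : A, ∀ n : ℕ, a - f n ∈ F n)
    -- the associated graded ring `⊕_{n≥0} F n / F (n+1)` is left Noetherian: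
    (hgr : ∃ (G : Type u) (_ : Ring G) (σ : ∀ n : ℕ, F n →+ G),
      (∀ (i j : ℕ) (x : F i) (y : F j),
          σ (i + j) ⟨(x : A) * (y : A), hmul i j x x.2 y y.2⟩ = σ i x * σ j y) ∧
      (∀ (n : ℕ) (x : F n), σ n x = 0 ↔ (x : A) ∈ F (n + 1)) ∧
      σ 0 ⟨1, by rw [hF0]; exact AddSubgroup.mem_top 1⟩ = 1 ∧
      DirectSum.IsInternal (fun n : ℕ => (σ n).range) ∧
      IsNoetherianRing G) :
    IsNoetherianRing A := by
  classical
  obtain ⟨G, iG, σ, hσmul, hker, hone, hint, hnoeth⟩ := hgr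
  have hanti : Antitone F := antitone_nat_of_succ_le hdec
  have hmemF0 : ∀ a : A, a ∈ F 0 := by intro a; rw [hF0]; trivial
  have hσcongr : ∀ (m n : ℕ) (h : m = n) (u : A) (hu : u ∈ F m),
      σ m ⟨u, hu⟩ = σ n ⟨u, h ▸ hu⟩ := by
    intro m n h u hu; subst h; rfl
  obtain ⟨π, hπadd, hπmem, hπof, hind⟩ :=
    gradedProj_aux (fun n : ℕ => (σ n).range) hint
  have hπzero : ∀ n, π n 0 = 0 := by
    intro n
    have h := hπadd n 0 0
    rw [add_zero] at h
    exact add_eq_left.mp h.symm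
  -- sums commute with projections
  have hπsum : ∀ (n : ℕ) (s : Finset G) (f : G → G),
      π n (∑ t ∈ s, f t) = ∑ t ∈ s, π n (f t) := by
    intro n s f
    induction s using Finset.cons_induction with
    | empty => simpa using hπzero n
    | cons a s ha ih =>
        rw [Finset.sum_cons, Finset.sum_cons, hπadd, ih]
  -- key multiplication lemma
  have hπmul : ∀ (n m : ℕ) (u : F m) (a : G),
      π n (a * σ m u) = if m ≤ n then π (n - m) a * σ m u else 0 := by
    intro n m u a
    refine hind (fun a => π n (a * σ m u) = if m ≤ n then π (n - m) a * σ m u else 0)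
      ?_ ?_ ?_ a
    · rw [zero_mul, hπzero]
      by_cases hmn : m ≤ n
      · rw [if_pos hmn, hπzero, zero_mul]
      · rw [if_neg hmn]
    · intro d z hz
      obtain ⟨y, rfl⟩ := hz
      have hprod : σ d y * σ m u = σ (d + m) ⟨(y : A) * u, hmul d m y y.2 u u.2⟩ :=
        (hσmul d m y u).symm
      rw [hprod, hπof n (d + m) _ ⟨_, rfl⟩]
      by_cases hmn : m ≤ n
      · rw [if_pos hmn, hπof (n - m) d _ ⟨_, rfl⟩]
        by_cases hd : n = d + m
        · rw [if_pos hd, if_pos (by omega), hprod]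
        · rw [if_neg hd, if_neg (by omega), zero_mul]
      · rw [if_neg hmn, if_neg (by omega)]
    · intro a b ha hb
      rw [add_mul, hπadd, ha, hb]
      by_cases hmn : m ≤ n
      · simp only [if_pos hmn, hπadd, add_mul]
      · simp only [if_neg hmn, add_zero]
  -- Noetherianity
  rw [isNoetherianRing_iff, isNoetherian_def]
  intro I
  -- the set of symbols of elements of I
  set S : Set G := {g : G | ∃ (n : ℕ) (x : A) (hx : x ∈ F n), x ∈ I ∧ σ n ⟨x, hx⟩ = g}
    with hS
  have hLfg : (Submodule.span G S).FG := IsNoetherian.noetherian _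
  obtain ⟨Tf, hTf⟩ := hLfg
  have hTsub : ∀ g ∈ Tf, ∃ T' : Finset G, ↑T' ⊆ S ∧ g ∈ Submodule.span G (T' : Set G) := by
    intro g hg
    exact Submodule.mem_span_finite_of_mem_span
      (by rw [← hTf]; exact Submodule.subset_span hg)
  choose T' hT'sub hT'mem using hTsub
  set T : Finset G := Tf.attach.biUnion (fun g => T' g.1 g.2) with hT
  have hTS : (T : Set G) ⊆ S := by
    intro t ht
    rw [hT] at ht
    simp only [Finset.coe_biUnion, Set.mem_iUnion, Finset.mem_coe] at ht
    obtain ⟨g, hg, hgt⟩ := ht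
    exact hT'sub g.1 g.2 hgt
  have hTspan : Submodule.span G (T : Set G) = Submodule.span G S := by
    refine le_antisymm (Submodule.span_mono hTS) ?_
    rw [← hTf]
    refine Submodule.span_le.mpr ?_
    intro g hg
    refine Submodule.span_mono ?_ (hT'mem g hg)
    intro t ht
    rw [hT]
    simp only [Finset.coe_biUnion, Set.mem_iUnion, Finset.mem_coe]
    exact ⟨⟨g, hg⟩, Finset.mem_attach _ _, ht⟩
  -- witnesses for the generators
  have hTdata : ∀ t : G, ∃ (n : ℕ) (x : A) (hx : x ∈ F n), x ∈ I ∧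
      (t ∈ (T : Set G) → σ n ⟨x, hx⟩ = t) := by
    intro t
    by_cases ht : t ∈ (T : Set G)
    · obtain ⟨n, x, hx, hxI, hσx⟩ := hTS ht
      exact ⟨n, x, hx, hxI, fun _ => hσx⟩
    · exact ⟨0, 0, zero_mem _, zero_mem _, fun h => absurd h ht⟩
  choose nt xt hxtF hxtI hxtσ using hTdata
  -- one-step approximation
  have approx : ∀ (k : ℕ) (x : A), x ∈ I → x ∈ F k →
      ∃ c : G → A, (∀ t ∈ T, c t ∈ F (k - nt t)) ∧
        (x - ∑ t ∈ T, c t * xt t) ∈ I ∧ (x - ∑ t ∈ T, c t * xt t) ∈ F (k + 1) := by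
    intro k x hxI hxF
    have hσx : σ k ⟨x, hxF⟩ ∈ Submodule.span G (T : Set G) := by
      rw [hTspan]
      exact Submodule.subset_span ⟨k, x, hxF, hxI, rfl⟩
    obtain ⟨a, -, ha⟩ := Submodule.mem_span_finset.mp hσx
    have hy : ∀ t : G, ∃ u : F (k - nt t), σ (k - nt t) u = π (k - nt t) (a t) :=
      fun t => AddMonoidHom.mem_range.mp (hπmem (k - nt t) (a t))
    choose y hy using hy
    set c : G → A := fun t => if nt t ≤ k then (y t : A) else 0 with hc
    have hcval : ∀ t, c t = if nt t ≤ k then (y t : A) else 0 := fun _ => rfl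
    have hcmem : ∀ t ∈ T, c t ∈ F (k - nt t) := by
      intro t _
      rw [hcval]
      by_cases h : nt t ≤ k
      · rw [if_pos h]; exact (y t).2
      · rw [if_neg h]; exact zero_mem _
    have hcprod : ∀ t ∈ T, c t * xt t ∈ F k := by
      intro t ht
      by_cases h : nt t ≤ k
      · have := hmul _ _ _ (hcmem t ht) _ (hxtF t)
        rwa [Nat.sub_add_cancel h] at this
      · rw [hcval t, if_neg h, zero_mul]
        exact zero_mem _
    have hI : (x - ∑ t ∈ T, c t * xt t) ∈ I := by
      refine sub_mem hxI (sum_mem fun t ht => ?_)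
      have := I.smul_mem (c t) (hxtI t)
      rwa [smul_eq_mul] at this
    refine ⟨c, hcmem, hI, ?_⟩
    -- now show membership in F (k+1) via vanishing of the symbol
    have hsub : (x - ∑ t ∈ T, c t * xt t) ∈ F k :=
      sub_mem hxF (sum_mem hcprod)
    set Y : F k := ∑ t ∈ T.attach, (⟨c t.1 * xt t.1, hcprod t.1 t.2⟩ : F k) with hYdef
    have hYcoe : (Y : A) = ∑ t ∈ T, c t * xt t := by
      rw [hYdef, AddSubmonoidClass.coe_finset_sum]
      exact Finset.sum_attach T (fun t => c t * xt t)
    have hterm : ∀ t : {z // z ∈ T},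
        σ k (⟨c t.1 * xt t.1, hcprod t.1 t.2⟩ : F k) = π k (a t.1 * t.1) := by
      rintro ⟨t, ht⟩
      have hts : σ (nt t) ⟨xt t, hxtF t⟩ = t := hxtσ t ht
      have key : σ k (⟨c t * xt t, hcprod t ht⟩ : F k)
          = π k (a t * σ (nt t) ⟨xt t, hxtF t⟩) := by
        rw [hπmul k (nt t) ⟨xt t, hxtF t⟩ (a t)]
        by_cases h : nt t ≤ k
        · rw [if_pos h, ← hy t]
          have e1 : k = (k - nt t) + nt t := (Nat.sub_add_cancel h).symm
          have e2 : c t = (y t : A) := (hcval t).trans (if_pos h)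
          have hm2 := hσmul (k - nt t) (nt t) (y t) ⟨xt t, hxtF t⟩
          rw [← hm2, hσcongr k ((k - nt t) + nt t) e1 _ (hcprod t ht)]
          refine congrArg (σ ((k - nt t) + nt t)) (Subtype.ext ?_)
          show c t * xt t = (y t : A) * xt t
          rw [e2]
        · rw [if_neg h]
          have e2 : c t = 0 := (hcval t).trans (if_neg h)
          have h0 : (⟨c t * xt t, hcprod t ht⟩ : F k) = 0 := by
            refine Subtype.ext ?_
            show c t * xt t = ((0 : F k) : A)
            rw [e2, zero_mul, ZeroMemClass.coe_zero]
          rw [h0, map_zero]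
      rw [key, hts]
    have hXY : σ k ⟨x, hxF⟩ = σ k Y := by
      rw [hYdef, map_sum]
      calc σ k ⟨x, hxF⟩ = π k (σ k ⟨x, hxF⟩) := by
            rw [hπof k k _ (AddMonoidHom.mem_range.mpr ⟨_, rfl⟩), if_pos rfl]
        _ = π k (∑ t ∈ T, a t * t) := by
            rw [← ha]
            simp only [smul_eq_mul]
        _ = ∑ t ∈ T, π k (a t * t) := hπsum k T _
        _ = ∑ t ∈ T.attach, π k (a t.1 * t.1) := (Finset.sum_attach T _).symm
        _ = ∑ t ∈ T.attach, σ k (⟨c t.1 * xt t.1, hcprod t.1 t.2⟩ : F k) := by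
            exact Finset.sum_congr rfl (fun t _ => (hterm t).symm)
    have hzero : σ k (⟨x - ∑ t ∈ T, c t * xt t, hsub⟩ : F k) = 0 := by
      have hd : (⟨x - ∑ t ∈ T, c t * xt t, hsub⟩ : F k) = ⟨x, hxF⟩ - Y :=
        Subtype.ext (by rw [AddSubgroup.coe_sub, hYcoe])
      rw [hd, map_sub, hXY, sub_self]
    exact (hker k _).mp hzero
  -- conclude: I is generated by the finitely many xt t
  refine ⟨T.image xt, le_antisymm ?_ ?_⟩
  · refine Submodule.span_le.mpr ?_
    intro z hz
    rw [Finset.coe_image] at hz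
    obtain ⟨t, _, rfl⟩ := hz
    exact hxtI t
  · intro x hxI
    -- iterate the approximation
    let q : ∀ k : ℕ, {r : A // r ∈ I ∧ r ∈ F k} := fun k => Nat.rec
      (⟨x, hxI, hmemF0 x⟩ : {r : A // r ∈ I ∧ r ∈ F 0})
      (fun k p =>
        ⟨p.1 - ∑ t ∈ T, (approx k p.1 p.2.1 p.2.2).choose t * xt t,
          (approx k p.1 p.2.1 p.2.2).choose_spec.2.1,
          (approx k p.1 p.2.1 p.2.2).choose_spec.2.2⟩) k
    let c : ℕ → G → A := fun k => (approx k (q k).1 (q k).2.1 (q k).2.2).choose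
    have hq0 : (q 0).1 = x := rfl
    have hqs : ∀ k, (q (k+1)).1 = (q k).1 - ∑ t ∈ T, c k t * xt t := fun k => rfl
    have hcF : ∀ k, ∀ t ∈ T, c k t ∈ F (k - nt t) :=
      fun k => (approx k (q k).1 (q k).2.1 (q k).2.2).choose_spec.1
    set Sc : ℕ → G → A := fun k t => ∑ j ∈ Finset.range k, c j t with hScDef
    have hScval : ∀ k t, Sc k t = ∑ j ∈ Finset.range k, c j t := fun _ _ => rfl
    have hScs : ∀ k t, Sc (k+1) t = Sc k t + c k t := by
      intro k t
      rw [hScval, hScval]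
      exact Finset.sum_range_succ _ _
    have hcum : ∀ k, x - ∑ t ∈ T, Sc k t * xt t = (q k).1 := by
      intro k
      induction k with
      | zero =>
          simp only [hScval, Finset.range_zero, Finset.sum_empty, zero_mul,
            Finset.sum_const_zero, sub_zero, hq0]
      | succ k ih =>
          calc x - ∑ t ∈ T, Sc (k+1) t * xt t
              = x - ∑ t ∈ T, (Sc k t * xt t + c k t * xt t) := by
                simp only [hScs, add_mul]
            _ = (x - ∑ t ∈ T, Sc k t * xt t) - ∑ t ∈ T, c k t * xt t := by
                rw [Finset.sum_add_distrib, sub_sub]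
            _ = (q k).1 - ∑ t ∈ T, c k t * xt t := by rw [ih]
            _ = (q (k+1)).1 := (hqs k).symm
    -- limits of the coefficients
    have hbex : ∀ t : G, ∃ b : A, t ∈ T → ∀ k, b - Sc (k + nt t) t ∈ F k := by
      intro t
      by_cases ht : t ∈ T
      · obtain ⟨b, hb⟩ := hcomplete (fun k => Sc (k + nt t) t) (by
          intro k
          show Sc (k + 1 + nt t) t - Sc (k + nt t) t ∈ F k
          have e1 : k + 1 + nt t = (k + nt t) + 1 := by omega
          rw [e1, hScs, add_sub_cancel_left]
          have := hcF (k + nt t) t ht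
          rwa [Nat.add_sub_cancel] at this)
        exact ⟨b, fun _ => hb⟩
      · exact ⟨0, fun h => absurd h ht⟩
    choose b hb using hbex
    have hxa : ∀ m, x - ∑ t ∈ T, b t * xt t ∈ F m := by
      intro m
      set k := m + ∑ t ∈ T, nt t with hk
      have hkm : m ≤ k := Nat.le_add_right _ _
      have hnt : ∀ t ∈ T, nt t ≤ k := by
        intro t ht
        calc nt t ≤ ∑ t ∈ T, nt t :=
              Finset.single_le_sum (fun _ _ => Nat.zero_le _) ht
          _ ≤ k := Nat.le_add_left _ _
      have h1 : x - ∑ t ∈ T, Sc k t * xt t ∈ F k := (hcum k) ▸ (q k).2.2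
      have h2 : ∀ t ∈ T, (b t - Sc k t) * xt t ∈ F k := by
        intro t ht
        have e1 : (k - nt t) + nt t = k := Nat.sub_add_cancel (hnt t ht)
        have h3 : b t - Sc k t ∈ F (k - nt t) := by
          have := hb t ht (k - nt t)
          rwa [e1] at this
        have := hmul _ _ _ h3 _ (hxtF t)
        rwa [e1] at this
      have hrw : x - ∑ t ∈ T, b t * xt t
          = (x - ∑ t ∈ T, Sc k t * xt t) - ∑ t ∈ T, (b t - Sc k t) * xt t := by
        simp only [sub_mul, Finset.sum_sub_distrib]
        abel
      rw [hrw]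
      exact hanti hkm (sub_mem h1 (sum_mem h2))
    have hxeq : x = ∑ t ∈ T, b t * xt t := by
      have hm : x - ∑ t ∈ T, b t * xt t ∈ ⨅ n, F n := by
        rw [AddSubgroup.mem_iInf]
        exact hxa
      rw [hsep, AddSubgroup.mem_bot] at hm
      exact sub_eq_zero.mp hm
    rw [hxeq]
    refine sum_mem fun t ht => ?_
    have hmemgen : xt t ∈ Submodule.span A ((T.image xt : Finset A) : Set A) := by
      refine Submodule.subset_span ?_
      rw [Finset.coe_image]
      exact ⟨t, ht, rfl⟩
    have := Submodule.smul_mem _ (b t) hmemgen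
    rwa [smul_eq_mul] at this
end

section
/- Let A be a ring and J a two-sided ideal of A such that the blow-up ring Bl_J(A) is left Noetherian (in particular A, being a quotient of Bl_J(A), is left Noetherian). Then the Artin–Rees lemma holds for J: for every finitely generated left A-module M and every submodule N ⊆ M there exists k ≥ 0 such that J^nM ∩ N = J^{n−k}·(J^kM ∩ N) for all n ≥ k. -/
open scoped Pointwise
open Polynomial

section BlowUp

variable {A : Type*} [Ring A]

/-- The blow-up ring `Bl_J(A) = ⊕_{i ≥ 0} J^i` of a two-sided ideal `J ⊆ A`, realized as the
subring of the polynomial ring `A[X]` consisting of the polynomials whose `X^i`-coefficient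
lies in `J^i` for every `i`. -/
def blowUp (J : Ideal A) (hJ : ∀ x ∈ J, ∀ a : A, x * a ∈ J) : Subring A[X] where
  carrier := {p : A[X] | ∀ i : ℕ, p.coeff i ∈ powSet J i}
  zero_mem' := fun i => by
    simp only [Polynomial.coeff_zero]; exact (powSet J i).zero_mem
  one_mem' := fun i => by
    rcases i with _ | i
    · exact AddSubgroup.mem_top _
    · simp only [Polynomial.coeff_one, Nat.succ_ne_zero, if_neg (Nat.succ_ne_zero i).symm]
      simpa using (powSet J (i + 1)).zero_mem
  add_mem' := fun {p q} hp hq i => by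
    simpa [Polynomial.coeff_add] using add_mem (hp i) (hq i)
  neg_mem' := fun {p} hp i => by
    simpa [Polynomial.coeff_neg] using neg_mem (hp i)
  mul_mem' := fun {p q} hp hq n => by
    rw [Polynomial.coeff_mul]
    refine AddSubgroup.sum_mem _ fun c hc => ?_
    have h := powSet_mul_mem J hJ c.1 c.2 (hp c.1) (hq c.2)
    rwa [Finset.HasAntidiagonal.mem_antidiagonal.mp hc] at h

end BlowUp

section Completion

variable {A : Type*} [Ring A]

theorem powSet_succ_le (J : Ideal A) :
    ∀ n : ℕ, powSet J (n + 1) ≤ powSet J n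
  | 0 => le_top
  | n + 1 => by
    rw [powSet_succ_succ]
    refine (AddSubgroup.closure_le _).mpr ?_
    rintro z ⟨u, hu, v, hv, rfl⟩
    exact powSet_mul_mem_left J (n + 1) u hv

/-- For a subset `S ⊆ A` and a submodule `N` of an `A`-module `M`, the submodule `S·N` of `M`
spanned by all products `x • m` with `x ∈ S`, `m ∈ N`. -/
def jsmul (S : Set A) {M : Type*} [AddCommGroup M] [Module A M] (N : Submodule A M) :
    Submodule A M :=
  Submodule.span A {z | ∃ x ∈ S, ∃ m ∈ N, z = x • m}

/-- The submodule `J^n M` of an `A`-module `M`. -/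
def jadic (J : Ideal A) (M : Type*) [AddCommGroup M] [Module A M] (n : ℕ) : Submodule A M :=
  jsmul ((powSet J n : AddSubgroup A) : Set A) (⊤ : Submodule A M)

theorem jadic_succ_le (J : Ideal A) (M : Type*) [AddCommGroup M] [Module A M] (n : ℕ) :
    jadic J M (n + 1) ≤ jadic J M n := by
  refine Submodule.span_mono ?_
  rintro z ⟨x, hx, m, hm, rfl⟩
  exact ⟨x, powSet_succ_le J n hx, m, hm, rfl⟩

/-- The transition map `M/J^{n+1}M → M/J^nM`. -/
def transition (J : Ideal A) (M : Type*) [AddCommGroup M] [Module A M] (n : ℕ) :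
    (M ⧸ jadic J M (n + 1)) →ₗ[A] M ⧸ jadic J M n :=
  Submodule.mapQ _ _ LinearMap.id (fun _ hx => jadic_succ_le J M n hx)

/-- The `J`-adic completion `M^∧ = lim_n M/J^nM` of an `A`-module `M`, realized as the
module of compatible sequences in `∀ n, M/J^nM`. -/
def adicCompletion (J : Ideal A) (M : Type*) [AddCommGroup M] [Module A M] :
    Submodule A (∀ n : ℕ, M ⧸ jadic J M n) where
  carrier := {f | ∀ n : ℕ, transition J M n (f (n + 1)) = f n}
  add_mem' := fun {f g} hf hg n => by
    simp only [Pi.add_apply, map_add, hf n, hg n]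
  zero_mem' := fun n => by simp
  smul_mem' := fun a f hf n => by
    simp only [Pi.smul_apply, map_smul, hf n]

theorem jadic_le_comap (J : Ideal A) {M M₂ : Type*} [AddCommGroup M] [Module A M]
    [AddCommGroup M₂] [Module A M₂] (f : M →ₗ[A] M₂) (n : ℕ) :
    jadic J M n ≤ (jadic J M₂ n).comap f := by
  rw [jadic, jsmul, Submodule.span_le]
  rintro z ⟨x, hx, m, _, rfl⟩
  simp only [SetLike.mem_coe, Submodule.mem_comap, map_smul]
  exact Submodule.subset_span ⟨x, hx, f m, Submodule.mem_top, rfl⟩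

/-- The map `M/J^nM → M₂/J^nM₂` induced by a linear map `f : M → M₂`. -/
def inducedQ (J : Ideal A) {M M₂ : Type*} [AddCommGroup M] [Module A M]
    [AddCommGroup M₂] [Module A M₂] (f : M →ₗ[A] M₂) (n : ℕ) :
    (M ⧸ jadic J M n) →ₗ[A] M₂ ⧸ jadic J M₂ n :=
  Submodule.mapQ _ _ f (jadic_le_comap J f n)

theorem transition_inducedQ (J : Ideal A) {M M₂ : Type*} [AddCommGroup M] [Module A M]
    [AddCommGroup M₂] [Module A M₂] (f : M →ₗ[A] M₂) (n : ℕ)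
    (x : M ⧸ jadic J M (n + 1)) :
    transition J M₂ n (inducedQ J f (n + 1) x) = inducedQ J f n (transition J M n x) := by
  obtain ⟨m, rfl⟩ := Submodule.Quotient.mk_surjective _ x
  simp [transition, inducedQ, Submodule.mapQ_apply]

/-- The map `M^∧ → M₂^∧` between `J`-adic completions induced by a linear map `f : M → M₂`;
this is the natural functorial structure of the `J`-adic completion. -/
def completionMap (J : Ideal A) {M M₂ : Type*} [AddCommGroup M] [Module A M]
    [AddCommGroup M₂] [Module A M₂] (f : M →ₗ[A] M₂) :
    adicCompletion J M →ₗ[A] adicCompletion J M₂ where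
  toFun g := ⟨fun n => inducedQ J f n (g.1 n), fun n => by
    rw [transition_inducedQ, g.2 n]⟩
  map_add' g₁ g₂ := Subtype.ext (funext fun n => by
    simp [Submodule.coe_add, Pi.add_apply, map_add])
  map_smul' a g := Subtype.ext (funext fun n => by
    simp [Submodule.coe_smul, Pi.smul_apply, map_smul])

end Completion

section ArtinReesAux

variable {A : Type*} [Ring A]

theorem powSet_one_coe' (J : Ideal A) : ((powSet J 1 : AddSubgroup A) : Set A) = J := rfl

theorem powSet_add_le (J : Ideal A) :
    ∀ (i j : ℕ), powSet J (i + j) ≤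
      AddSubgroup.closure ((powSet J i : Set A) * (powSet J j : Set A))
  | 0, j => by
    rw [zero_add]
    intro x hx
    exact AddSubgroup.subset_closure (by
      simpa [powSet] using Set.mul_mem_mul (AddSubgroup.mem_top (1 : A)) hx)
  | 1, 0 => by
    intro x hx
    rw [add_zero] at hx
    exact AddSubgroup.subset_closure (by
      simpa [powSet] using Set.mul_mem_mul hx (AddSubgroup.mem_top (1 : A)))
  | 1, j + 1 => by
    rw [show 1 + (j + 1) = j + 2 from by omega, powSet_succ_succ, powSet_one_coe']
  | i + 2, j => by
    rw [show i + 2 + j = (i + j) + 2 from by omega, powSet_succ_succ]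
    refine (AddSubgroup.closure_le _).mpr ?_
    rintro z ⟨u, hu, v, hv, rfl⟩
    have hv' : v ∈ AddSubgroup.closure ((powSet J (i + 1) : Set A) * (powSet J j : Set A)) := by
      have h := powSet_add_le J (i + 1) j
      rw [show i + 1 + j = i + j + 1 from by omega] at h
      exact h hv
    clear hv
    show u * v ∈ _
    induction hv' using AddSubgroup.closure_induction with
    | mem w hw =>
      obtain ⟨y, hy, z, hz, rfl⟩ := hw
      show u * (y * z) ∈ _
      rw [← mul_assoc]
      refine AddSubgroup.subset_closure (Set.mul_mem_mul ?_ hz)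
      exact AddSubgroup.subset_closure (Set.mul_mem_mul hu hy)
    | zero => simpa using AddSubgroup.zero_mem _
    | add a b _ _ iha ihb => simpa [mul_add] using add_mem iha ihb
    | neg a _ iha => simpa [mul_neg] using neg_mem iha

variable {M M₂ : Type*} [AddCommGroup M] [Module A M] [AddCommGroup M₂] [Module A M₂]

theorem smul_mem_jsmul (J : Ideal A) (hJ : ∀ x ∈ J, ∀ a : A, x * a ∈ J)
    (P : Submodule A M) (i l : ℕ) {w : M}
    (hw : w ∈ jsmul ((powSet J l : AddSubgroup A) : Set A) P)
    {x : A} (hx : x ∈ powSet J i) :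
    x • w ∈ jsmul ((powSet J (i + l) : AddSubgroup A) : Set A) P := by
  induction hw using Submodule.span_induction generalizing x with
  | mem z hz =>
    obtain ⟨y, hy, m, hm, rfl⟩ := hz
    rw [smul_smul]
    exact Submodule.subset_span ⟨x * y, powSet_mul_mem J hJ i l hx hy, m, hm, rfl⟩
  | zero => simpa using Submodule.zero_mem _
  | add a b _ _ iha ihb => simpa [smul_add] using Submodule.add_mem _ (iha hx) (ihb hx)
  | smul a w hw ih =>
    rw [smul_smul]
    exact ih (powSet_mul_mem_right J hJ i a hx)

theorem smul_mem_jadic (J : Ideal A) (hJ : ∀ x ∈ J, ∀ a : A, x * a ∈ J)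
    (i j : ℕ) {w : M} (hw : w ∈ jadic J M j) {x : A} (hx : x ∈ powSet J i) :
    x • w ∈ jadic J M (i + j) :=
  smul_mem_jsmul J hJ ⊤ i j hw hx

theorem jsmul_map (f : M →ₗ[A] M₂) (S : Set A) (P : Submodule A M) :
    (jsmul S P).map f = jsmul S (P.map f) := by
  rw [jsmul, Submodule.map_span, jsmul]
  congr 1
  ext z
  constructor
  · rintro ⟨w, ⟨x, hx, m, hm, rfl⟩, rfl⟩
    exact ⟨x, hx, f m, ⟨m, hm, rfl⟩, (f.map_smul x m)⟩
  · rintro ⟨x, hx, m', ⟨m, hm, rfl⟩, rfl⟩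
    exact ⟨x • m, ⟨x, hx, m, hm, rfl⟩, f.map_smul x m⟩

theorem jadic_map (J : Ideal A) (f : M →ₗ[A] M₂) (hf : Function.Surjective f) (n : ℕ) :
    (jadic J M n).map f = jadic J M₂ n := by
  rw [jadic, jadic, jsmul_map, Submodule.map_top, LinearMap.range_eq_top.mpr hf]

theorem jadic_pi_iff (J : Ideal A) (hJ : ∀ x ∈ J, ∀ a : A, x * a ∈ J)
    (r : ℕ) (n : ℕ) (v : Fin r → A) :
    v ∈ jadic J (Fin r → A) n ↔ ∀ idx, v idx ∈ powSet J n := by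
  constructor
  · intro hv
    induction hv using Submodule.span_induction with
    | mem z hz =>
      obtain ⟨x, hx, m, _, rfl⟩ := hz
      intro idx
      exact powSet_mul_mem_right J hJ n (m idx) hx
    | zero => intro idx; simpa using (powSet J n).zero_mem
    | add a b _ _ iha ihb =>
      intro idx
      simpa using add_mem (iha idx) (ihb idx)
    | smul a w _ ih =>
      intro idx
      exact powSet_mul_mem_left J n a (ih idx)
  · intro hv
    have hrw : ∑ idx : Fin r, (v idx) • (Pi.single idx 1 : Fin r → A) = v := by
      have h1 : ∀ idx, (v idx) • (Pi.single idx 1 : Fin r → A) = Pi.single idx (v idx) := by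
        intro idx
        funext j
        by_cases h : j = idx
        · subst h; simp [Pi.single_eq_same, smul_eq_mul]
        · simp [Pi.single_eq_of_ne h, smul_eq_mul]
      simp_rw [h1]
      exact Finset.univ_sum_single v
    rw [← hrw]
    refine Submodule.sum_mem _ fun idx _ => ?_
    exact Submodule.subset_span ⟨v idx, hv idx, Pi.single idx 1, Submodule.mem_top, rfl⟩

end ArtinReesAux


section ReesModule

variable {A : Type*} [Ring A] (J : Ideal A) (hJ : ∀ x ∈ J, ∀ a : A, x * a ∈ J)

theorem mem_blowUp_iff {p : A[X]} : p ∈ blowUp J hJ ↔ ∀ i, p.coeff i ∈ powSet J i := Iff.rfl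

/-- The Rees submodule associated to a submodule `N₀ ⊆ A^r`: the sequences of coefficient
vectors lying componentwise in the blow-up ring and degreewise in `N₀`. -/
def reesN (r : ℕ) (N₀ : Submodule A (Fin r → A)) :
    Submodule (blowUp J hJ) (Fin r → A[X]) where
  carrier := {f | (∀ idx, f idx ∈ blowUp J hJ) ∧ ∀ n, (fun idx => (f idx).coeff n) ∈ N₀}
  zero_mem' := ⟨fun _ => (blowUp J hJ).zero_mem, fun n => by
    have h : (fun idx => ((0 : Fin r → A[X]) idx).coeff n) = (0 : Fin r → A) := by
      funext idx; simp
    rw [h]; exact N₀.zero_mem⟩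
  add_mem' := fun {f g} hf hg => ⟨fun idx => (blowUp J hJ).add_mem (hf.1 idx) (hg.1 idx),
    fun n => by
      have h : (fun idx => ((f + g) idx).coeff n)
          = (fun idx => (f idx).coeff n) + (fun idx => (g idx).coeff n) := by
        funext idx; simp
      rw [h]; exact N₀.add_mem (hf.2 n) (hg.2 n)⟩
  smul_mem' := fun b f hf => ⟨fun idx => (blowUp J hJ).mul_mem b.2 (hf.1 idx), fun n => by
    have h : (fun idx => ((b • f) idx).coeff n)
        = ∑ ij ∈ Finset.HasAntidiagonal.antidiagonal n,
            ((b : A[X]).coeff ij.1) • (fun idx => (f idx).coeff ij.2) := by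
      funext idx
      show ((b : A[X]) * f idx).coeff n = _
      rw [Polynomial.coeff_mul]
      simp [Finset.sum_apply, smul_eq_mul]
    rw [h]
    exact Submodule.sum_mem _ fun ij _ => N₀.smul_mem _ (hf.2 ij.2)⟩

end ReesModule

section FreeCase

variable {A : Type*} [Ring A] (J : Ideal A) (hJ : ∀ x ∈ J, ∀ a : A, x * a ∈ J)

theorem reesN_fg (hbl : IsNoetherianRing (blowUp J hJ)) (r : ℕ)
    (N₀ : Submodule A (Fin r → A)) : (reesN J hJ r N₀).FG := by
  classical
  set B := blowUp J hJ with hB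
  set e : Fin r → (Fin r → A[X]) := fun idx => Pi.single idx 1 with he
  set T : Submodule B (Fin r → A[X]) := Submodule.span B (Set.range e) with hT
  have hle : reesN J hJ r N₀ ≤ T := by
    intro f hf
    have hrw : f = ∑ idx : Fin r, ((⟨f idx, hf.1 idx⟩ : B) • e idx) := by
      funext j
      rw [Finset.sum_apply]
      have h1 : ∀ idx : Fin r,
          ((⟨f idx, hf.1 idx⟩ : B) • e idx) j = if j = idx then f j else 0 := by
        intro idx
        show (f idx) * (e idx j) = _
        by_cases h : j = idx
        · subst h; simp [he, Pi.single_eq_same]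
        · simp [he, Pi.single_eq_of_ne h, h]
      simp_rw [h1]
      simp
    rw [hrw]
    exact Submodule.sum_mem _ fun idx _ =>
      Submodule.smul_mem _ _ (Submodule.subset_span ⟨idx, rfl⟩)
  haveI := hbl
  haveI : IsNoetherian B T :=
    isNoetherian_of_fg_of_noetherian T (Submodule.fg_span (Set.finite_range e))
  have hfg : ((reesN J hJ r N₀).comap T.subtype).FG := IsNoetherian.noetherian _
  have hmap := hfg.map T.subtype
  rwa [Submodule.map_comap_subtype, inf_eq_right.mpr hle] at hmap

theorem artinRees_free (hbl : IsNoetherianRing (blowUp J hJ)) (r : ℕ)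
    (N₀ : Submodule A (Fin r → A)) :
    ∃ k : ℕ, ∀ n : ℕ, k ≤ n →
      jadic J (Fin r → A) n ⊓ N₀ =
        jsmul ((powSet J (n - k) : AddSubgroup A) : Set A)
          (jadic J (Fin r → A) k ⊓ N₀) := by
  classical
  obtain ⟨S, hS⟩ := reesN_fg J hJ hbl r N₀
  set B := blowUp J hJ with hB
  set k := S.sup (fun p => Finset.univ.sup fun idx => (p idx).natDegree) with hk
  clear_value k
  refine ⟨k, fun n hn => ?_⟩
  set Q := jadic J (Fin r → A) k ⊓ N₀ with hQ
  have hcase : ∀ (m i j : ℕ), i + j = m → k ≤ m → ∀ x ∈ powSet J i, ∀ w : Fin r → A,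
      (j < k → w ∈ jadic J (Fin r → A) j ⊓ N₀) →
      (k ≤ j → w ∈ jsmul ((powSet J (j - k) : AddSubgroup A) : Set A) Q) →
      x • w ∈ jsmul ((powSet J (m - k) : AddSubgroup A) : Set A) Q := by
    intro m i j hij hkm x hx w hlt hge
    rcases le_or_gt k j with h | h
    · have h2 := smul_mem_jsmul J hJ Q i (j - k) (hge h) hx
      have e1 : i + (j - k) = m - k := by clear * - hij h hkm; omega
      rwa [e1] at h2
    · obtain ⟨hw1, hw2⟩ := Submodule.mem_inf.mp (hlt h)
      have hx' : x ∈ AddSubgroup.closure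
          ((powSet J (m - k) : Set A) * (powSet J (k - j) : Set A)) := by
        have h3 := powSet_add_le J (m - k) (k - j)
        have e2 : m - k + (k - j) = i := by clear * - hij h hkm; omega
        rw [e2] at h3
        exact h3 hx
      clear hx
      induction hx' using AddSubgroup.closure_induction with
      | mem z hz =>
        obtain ⟨y, hy, z', hz', rfl⟩ := hz
        show (y * z') • w ∈ _
        rw [mul_smul]
        refine Submodule.subset_span ⟨y, hy, z' • w, Submodule.mem_inf.mpr ⟨?_, N₀.smul_mem _ hw2⟩, rfl⟩
        have h4 := smul_mem_jadic J hJ (k - j) j hw1 hz'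
        have e3 : k - j + j = k := by clear * - h; omega
        rwa [e3] at h4
      | zero => simpa using Submodule.zero_mem _
      | add a b _ _ iha ihb => simpa [add_smul] using Submodule.add_mem _ iha ihb
      | neg a _ iha => simpa [neg_smul] using Submodule.neg_mem _ iha
  have key : ∀ f, f ∈ Submodule.span B (S : Set (Fin r → A[X])) → ∀ m : ℕ, k ≤ m →
      (fun idx => (f idx).coeff m) ∈ jsmul ((powSet J (m - k) : AddSubgroup A) : Set A) Q := by
    intro f hf
    induction hf using Submodule.span_induction with
    | mem p hp =>
      intro m hm
      have hp' : p ∈ reesN J hJ r N₀ := hS ▸ Submodule.subset_span hp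
      rcases eq_or_lt_of_le hm with h | h
      · subst h
        refine Submodule.subset_span ⟨1, ?_, _, Submodule.mem_inf.mpr
          ⟨(jadic_pi_iff J hJ r k _).mpr fun idx => hp'.1 idx k, hp'.2 k⟩, (one_smul A _).symm⟩
        rw [Nat.sub_self]
        exact AddSubgroup.mem_top 1
      · have hz : (fun idx => (p idx).coeff m) = (0 : Fin r → A) := by
          funext idx
          refine Polynomial.coeff_eq_zero_of_natDegree_lt ?_
          calc (p idx).natDegree
              ≤ Finset.univ.sup (fun idx => (p idx).natDegree) :=
                Finset.le_sup (f := fun idx => (p idx).natDegree) (Finset.mem_univ idx)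
            _ ≤ k := by rw [hk]; exact Finset.le_sup (f := fun p => Finset.univ.sup fun idx => (p idx).natDegree) (Finset.mem_coe.mp hp)
            _ < m := h
        rw [hz]
        exact Submodule.zero_mem _
    | zero =>
      intro m hm
      have hz : (fun idx => ((0 : Fin r → A[X]) idx).coeff m) = (0 : Fin r → A) := by
        funext idx; simp
      rw [hz]
      exact Submodule.zero_mem _
    | add f g _ _ ihf ihg =>
      intro m hm
      have hz : (fun idx => ((f + g) idx).coeff m)
          = (fun idx => (f idx).coeff m) + (fun idx => (g idx).coeff m) := by
        funext idx; simp
      rw [hz]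
      exact Submodule.add_mem _ (ihf m hm) (ihg m hm)
    | smul b f hf ih =>
      intro m hm
      have hf' : f ∈ reesN J hJ r N₀ := hS ▸ hf
      have hz : (fun idx => ((b • f) idx).coeff m)
          = ∑ ij ∈ Finset.HasAntidiagonal.antidiagonal m,
              ((b : A[X]).coeff ij.1) • (fun idx => (f idx).coeff ij.2) := by
        funext idx
        show ((b : A[X]) * f idx).coeff m = _
        rw [Polynomial.coeff_mul]
        simp [Finset.sum_apply, smul_eq_mul]
      rw [hz]
      refine Submodule.sum_mem _ fun ij hij => ?_
      refine hcase m ij.1 ij.2 (Finset.HasAntidiagonal.mem_antidiagonal.mp hij) hm _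
        ((mem_blowUp_iff J hJ).mp b.2 ij.1) _ (fun h => ?_) (fun h => ih ij.2 h)
      exact Submodule.mem_inf.mpr
        ⟨(jadic_pi_iff J hJ r ij.2 _).mpr fun idx => hf'.1 idx ij.2, hf'.2 ij.2⟩
  apply le_antisymm
  · intro u hu
    obtain ⟨hu1, hu2⟩ := Submodule.mem_inf.mp hu
    set f : Fin r → A[X] := fun idx => Polynomial.monomial n (u idx) with hf
    have hmem : f ∈ reesN J hJ r N₀ := by
      constructor
      · intro idx i
        show (Polynomial.monomial n (u idx)).coeff i ∈ powSet J i
        rw [Polynomial.coeff_monomial]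
        by_cases h : n = i
        · subst h
          rw [if_pos rfl]
          exact (jadic_pi_iff J hJ r n u).mp hu1 idx
        · rw [if_neg h]
          exact (powSet J i).zero_mem
      · intro m
        by_cases h : n = m
        · subst h
          have h2 : (fun idx => (f idx).coeff n) = u := by
            funext idx; simp [hf, Polynomial.coeff_monomial]
          rw [h2]; exact hu2
        · have h2 : (fun idx => (f idx).coeff m) = (0 : Fin r → A) := by
            funext idx; simp [hf, Polynomial.coeff_monomial, h]
          rw [h2]; exact N₀.zero_mem
    have hfspan : f ∈ Submodule.span B (S : Set (Fin r → A[X])) := hS.symm ▸ hmem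
    have h3 := key f hfspan n hn
    have h4 : (fun idx => (f idx).coeff n) = u := by
      funext idx; simp [hf, Polynomial.coeff_monomial]
    rwa [h4] at h3
  · refine Submodule.span_le.mpr ?_
    rintro z ⟨x, hx, w, hw, rfl⟩
    obtain ⟨hw1, hw2⟩ := Submodule.mem_inf.mp hw
    refine Submodule.mem_inf.mpr ⟨?_, N₀.smul_mem x hw2⟩
    have h5 := smul_mem_jadic J hJ (n - k) k hw1 hx
    have e4 : n - k + k = n := by clear * - hn; omega
    rwa [e4] at h5

end FreeCase

/-- **Artin–Rees.** Let `A` be a ring and `J` a two-sided ideal of `A` such that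
the blow-up ring `Bl_J(A)` is left Noetherian. Then for every finitely generated left
`A`-module `M` and every submodule `N ⊆ M` there exists `k ≥ 0` such that
`J^n M ∩ N = J^{n-k}·(J^k M ∩ N)` for all `n ≥ k`. -/
theorem artinRees {A : Type*} [Ring A] (J : Ideal A)
    (hJtwoSided : ∀ x ∈ J, ∀ a : A, x * a ∈ J)
    (hbl : IsNoetherianRing (blowUp J hJtwoSided))
    (M : Type*) [AddCommGroup M] [Module A M] [Module.Finite A M] (N : Submodule A M) :
    ∃ k : ℕ, ∀ n : ℕ, k ≤ n →
      jadic J M n ⊓ N =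
        jsmul ((powSet J (n - k) : AddSubgroup A) : Set A) (jadic J M k ⊓ N) := by
  obtain ⟨r, π, hπ⟩ := Module.Finite.exists_fin' A M
  set N₀ := N.comap π with hN₀
  obtain ⟨k, hk⟩ := artinRees_free J hJtwoSided hbl r N₀
  refine ⟨k, fun n hn => ?_⟩
  have hinf : ∀ m : ℕ, (jadic J (Fin r → A) m ⊓ N₀).map π = jadic J M m ⊓ N := by
    intro m
    apply le_antisymm
    · intro z hz
      obtain ⟨v, hv, rfl⟩ := Submodule.mem_map.mp hz
      obtain ⟨hv1, hv2⟩ := Submodule.mem_inf.mp hv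
      exact Submodule.mem_inf.mpr ⟨jadic_le_comap J π m hv1, hv2⟩
    · intro z hz
      obtain ⟨hz1, hz2⟩ := Submodule.mem_inf.mp hz
      have hz1' : z ∈ (jadic J (Fin r → A) m).map π := by
        rw [jadic_map J π hπ]; exact hz1
      obtain ⟨v, hv, rfl⟩ := Submodule.mem_map.mp hz1'
      exact Submodule.mem_map.mpr ⟨v, Submodule.mem_inf.mpr ⟨hv, hz2⟩, rfl⟩
  rw [← hinf n, hk n hn, jsmul_map, hinf k]
end

section
/- Let A be a ring and J a two-sided ideal of A such that the blow-up ring Bl_J(A) is left Noetherian and J is contained in the Jacobson radical of A. Then for every finitely generated left A-module M and every submodule N ⊆ M one has ⋂_{n≥0} (N + J^nM) = N. In particular (N = 0), every finitely generated left A-module is separated in the J-adic topology, and every submodule of a finitely generated left A-module is closed in the J-adic topology. -/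
open scoped Pointwise
open Polynomial

section KrullAux

variable {A : Type*} [Ring A]

theorem powSet_le_one (J : Ideal A) : ∀ p : ℕ, powSet J (p + 1) ≤ powSet J 1
  | 0 => le_rfl
  | p + 1 => (powSet_succ_le J (p + 1)).trans (powSet_le_one J p)

/-- `J^n` as a left ideal. -/
def powIdeal (J : Ideal A) (n : ℕ) : Ideal A where
  carrier := powSet J n
  add_mem' := add_mem
  zero_mem' := zero_mem _
  smul_mem' := fun a x hx => powSet_mul_mem_left J n a hx

theorem jadic_map_surj (J : Ideal A) {M M₂ : Type*} [AddCommGroup M] [Module A M]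
    [AddCommGroup M₂] [Module A M₂] (f : M →ₗ[A] M₂) (hf : Function.Surjective f) (n : ℕ) :
    (jadic J M n).map f = jadic J M₂ n := by
  rw [jadic, jadic, jsmul, jsmul, Submodule.map_span]
  congr 1
  ext z
  constructor
  · rintro ⟨w, ⟨x, hx, m, -, rfl⟩, rfl⟩
    exact ⟨x, hx, f m, Submodule.mem_top, map_smul f x m⟩
  · rintro ⟨x, hx, m₂, -, rfl⟩
    obtain ⟨m, rfl⟩ := hf m₂
    exact ⟨x • m, ⟨x, hx, m, Submodule.mem_top, rfl⟩, map_smul f x m⟩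

theorem jadic_pi_le (J : Ideal A) (hJ : ∀ x ∈ J, ∀ a : A, x * a ∈ J) (k n : ℕ) :
    jadic J (Fin k → A) n ≤ Submodule.pi Set.univ (fun _ => powIdeal J n) := by
  rw [jadic, jsmul, Submodule.span_le]
  rintro z ⟨x, hx, c, -, rfl⟩
  intro i _
  exact powSet_mul_mem_right J hJ n (c i) hx

theorem monomial_mem_blowUp (J : Ideal A) (hJ : ∀ x ∈ J, ∀ a : A, x * a ∈ J) {m : ℕ} {a : A}
    (ha : a ∈ powSet J m) : (monomial m a : A[X]) ∈ blowUp J hJ := by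
  intro i
  rw [Polynomial.coeff_monomial]
  split_ifs with h
  · exact h ▸ ha
  · exact zero_mem _

theorem isNoetherianRing_of_blowUp (J : Ideal A) (hJ : ∀ x ∈ J, ∀ a : A, x * a ∈ J)
    (hbl : IsNoetherianRing (blowUp J hJ)) : IsNoetherianRing A := by
  haveI := hbl
  refine isNoetherianRing_of_surjective (blowUp J hJ) A
    ((Polynomial.constantCoeff).comp (blowUp J hJ).subtype) ?_
  intro a
  refine ⟨⟨Polynomial.C a, ?_⟩, by simp⟩
  rw [← Polynomial.monomial_zero_left]
  exact monomial_mem_blowUp J hJ (AddSubgroup.mem_top a)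

theorem exists_left_inv_one_sub {a : A} (ha : a ∈ Ideal.jacobson (⊥ : Ideal A)) :
    ∃ u : A, u * (1 - a) = 1 := by
  obtain ⟨z, hz⟩ := Ideal.mem_jacobson_iff.mp ha (-1)
  rw [Ideal.mem_bot, sub_eq_zero] at hz
  refine ⟨z, ?_⟩
  have h2 : z * (1 - a) = z * -1 * a + z := by noncomm_ring
  rw [h2, hz]

theorem jsmul_span_le_iSup (J : Ideal A) (hJ : ∀ x ∈ J, ∀ a : A, x * a ∈ J)
    {M : Type*} [AddCommGroup M] [Module A M] (s : Finset M) :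
    jsmul (J : Set A) (Submodule.span A (s : Set M)) ≤
      ⨆ y ∈ s, Submodule.map (LinearMap.toSpanSingleton A M y) (J : Submodule A A) := by
  have claim : ∀ m ∈ Submodule.span A (s : Set M), ∀ x ∈ J,
      x • m ∈ ⨆ y ∈ s, Submodule.map (LinearMap.toSpanSingleton A M y) (J : Submodule A A) := by
    intro m hm
    induction hm using Submodule.span_induction with
    | mem y hy =>
      intro x hx
      exact Submodule.mem_iSup_of_mem y (Submodule.mem_iSup_of_mem hy ⟨x, hx, rfl⟩)
    | zero => intro x hx; simpa using Submodule.zero_mem _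
    | add y₁ y₂ h₁ h₂ ih₁ ih₂ =>
      intro x hx
      rw [smul_add]
      exact add_mem (ih₁ x hx) (ih₂ x hx)
    | smul c y hy ih =>
      intro x hx
      rw [smul_smul]
      exact ih (x * c) (hJ x hx c)
  rw [jsmul, Submodule.span_le]
  rintro z ⟨x, hx, m, hm, rfl⟩
  exact claim m hm x hx

theorem nakayama_aux (J : Ideal A) (hJ : ∀ x ∈ J, ∀ a : A, x * a ∈ J)
    (hjac : J ≤ Ideal.jacobson (⊥ : Ideal A)) {M : Type*} [AddCommGroup M] [Module A M] :
    ∀ (n : ℕ) (s : Finset M), s.card ≤ n →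
      Submodule.span A (s : Set M) ≤ jsmul (J : Set A) (Submodule.span A (s : Set M)) →
      Submodule.span A (s : Set M) = ⊥ := by
  classical
  intro n
  induction n with
  | zero =>
    intro s hcard _
    rw [Finset.card_eq_zero.mp (Nat.le_zero.mp hcard)]
    simp
  | succ n ih =>
    intro s hcard hle
    rcases Finset.eq_empty_or_nonempty s with rfl | ⟨x, hx⟩
    · simp
    · have hxT := jsmul_span_le_iSup J hJ s (hle (Submodule.subset_span hx))
      rw [Submodule.mem_iSup_finset_iff_exists_sum] at hxT
      obtain ⟨μ, hμ⟩ := hxT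
      have hrep : ∀ y : M, ∃ a : A, a ∈ J ∧ a • y = (μ y : M) := by
        intro y
        obtain ⟨a, haJ, hay⟩ := (μ y).2
        exact ⟨a, haJ, hay⟩
      choose a haJ hay using hrep
      have hsum : ∑ y ∈ s, a y • y = x := by
        rw [← hμ]; exact Finset.sum_congr rfl fun y _ => hay y
      have h1 : (1 - a x) • x = ∑ y ∈ s.erase x, a y • y := by
        have h := Finset.add_sum_erase s (fun y => a y • y) hx
        rw [hsum] at h
        rw [sub_smul, one_smul]
        exact (eq_sub_of_add_eq' h).symm
      obtain ⟨u, hu⟩ := exists_left_inv_one_sub (hjac (haJ x))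
      have hxe : x ∈ Submodule.span A ((s.erase x : Finset M) : Set M) := by
        have hmem : u • ((1 - a x) • x) ∈
            Submodule.span A ((s.erase x : Finset M) : Set M) := by
          rw [h1]
          exact Submodule.smul_mem _ u (Submodule.sum_mem _ fun y hy =>
            Submodule.smul_mem _ _ (Submodule.subset_span hy))
        rwa [← mul_smul, hu, one_smul] at hmem
      have hspan : Submodule.span A (s : Set M) =
          Submodule.span A ((s.erase x : Finset M) : Set M) := by
        refine le_antisymm (Submodule.span_le.mpr fun y hy => ?_)
          (Submodule.span_mono (by exact_mod_cast Finset.erase_subset x s))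
        rcases eq_or_ne y x with rfl | hne
        · exact hxe
        · exact Submodule.subset_span (Finset.mem_coe.mpr
            (Finset.mem_erase.mpr ⟨hne, hy⟩))
      rw [hspan] at hle ⊢
      refine ih (s.erase x) ?_ hle
      have := Finset.card_erase_of_mem hx
      omega

theorem nakayama (J : Ideal A) (hJ : ∀ x ∈ J, ∀ a : A, x * a ∈ J)
    (hjac : J ≤ Ideal.jacobson (⊥ : Ideal A)) {M : Type*} [AddCommGroup M] [Module A M]
    (L : Submodule A M) (hfg : L.FG) (hle : L ≤ jsmul (J : Set A) L) : L = ⊥ := by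
  obtain ⟨s, hs⟩ := hfg
  rw [← hs] at hle ⊢
  exact nakayama_aux J hJ hjac s.card s le_rfl hle

end KrullAux


section KrullMain

variable {A : Type*} [Ring A]

theorem coeff_fun_zero_eq {k : ℕ} (d : ℕ) {J : Ideal A}
    {hJ : ∀ x ∈ J, ∀ a : A, x * a ∈ J} :
    (fun i : Fin k => (((0 : Fin k → blowUp J hJ) i : A[X])).coeff d) = (0 : Fin k → A) :=
  funext fun i => by simp

set_option maxHeartbeats 2000000 in
set_option synthInstance.maxHeartbeats 1000000 in
theorem iInf_jadic_eq_bot (J : Ideal A) (hJ : ∀ x ∈ J, ∀ a : A, x * a ∈ J)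
    (hbl : IsNoetherianRing (blowUp J hJ)) (hjac : J ≤ Ideal.jacobson (⊥ : Ideal A))
    (M : Type*) [AddCommGroup M] [Module A M] [Module.Finite A M] :
    (⨅ n : ℕ, jadic J M n) = ⊥ := by
  classical
  haveI hA : IsNoetherianRing A := isNoetherianRing_of_blowUp J hJ hbl
  haveI hM : IsNoetherian A M := isNoetherian_of_isNoetherianRing_of_finite A M
  haveI := hbl
  set B := blowUp J hJ with hB
  set L := ⨅ n : ℕ, jadic J M n with hL
  obtain ⟨k, π, hπ⟩ := Module.Finite.exists_fin' A M
  -- the chain of submodules of B^k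
  set S : ℕ → Set (Fin k → B) := fun n => {v | ∃ m ≤ n, ∃ ξ : Fin k → A,
      (∀ i, ξ i ∈ powSet J m) ∧ π ξ ∈ L ∧ ∀ i, (v i : A[X]) = monomial m (ξ i)} with hS
  set E : ℕ → Submodule B (Fin k → B) := fun n => Submodule.span B (S n) with hE
  have hmono : Monotone E := by
    intro n m hnm
    refine Submodule.span_mono ?_
    rintro v ⟨d, hd, hrest⟩
    exact ⟨d, hd.trans hnm, hrest⟩
  obtain ⟨t, ht0⟩ := monotone_stabilizes_iff_noetherian.mpr
    (inferInstance : IsNoetherian B (Fin k → B)) ⟨E, hmono⟩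
  have ht : ∀ m, t ≤ m → E t = E m := fun m hm => ht0 m hm
  -- key induction over the span
  have key : ∀ v ∈ E t, (∀ d : ℕ, π (fun i => ((v i : A[X])).coeff d) ∈ L) ∧
      π (fun i => ((v i : A[X])).coeff (t + 1)) ∈ jsmul (J : Set A) (L : Submodule A M) := by
    intro v hv
    induction hv using Submodule.span_induction with
    | mem v hv =>
      obtain ⟨m, hm, ξ, hξ, hπξ, hvi⟩ := hv
      constructor
      · intro d
        by_cases hdm : m = d
        · subst hdm
          have hfun : (fun i => (v i : A[X]).coeff m) = ξ :=
            funext fun i => by rw [hvi i, Polynomial.coeff_monomial, if_pos rfl]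
          rw [hfun]; exact hπξ
        · have hfun : (fun i => (v i : A[X]).coeff d) = (0 : Fin k → A) :=
            funext fun i => by rw [hvi i, Polynomial.coeff_monomial, if_neg hdm]; rfl
          rw [hfun, map_zero]; exact zero_mem _
      · have hfun : (fun i => (v i : A[X]).coeff (t + 1)) = (0 : Fin k → A) :=
          funext fun i => by
            rw [hvi i, Polynomial.coeff_monomial, if_neg (by omega)]; rfl
        rw [hfun, map_zero]; exact zero_mem _
    | zero =>
      constructor
      · intro d; rw [coeff_fun_zero_eq d, map_zero]; exact zero_mem _
      · rw [coeff_fun_zero_eq (t + 1), map_zero]; exact zero_mem _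
    | add v w hv hw ihv ihw =>
      have hfun : ∀ d : ℕ, (fun i => ((v + w) i : A[X]).coeff d) =
          (fun i => (v i : A[X]).coeff d) + (fun i => (w i : A[X]).coeff d) :=
        fun d => funext fun i => by
          simp [Pi.add_apply, Polynomial.coeff_add]
      constructor
      · intro d; rw [hfun d, map_add]; exact add_mem (ihv.1 d) (ihw.1 d)
      · rw [hfun (t + 1), map_add]; exact add_mem ihv.2 ihw.2
    | smul b v hv ih =>
      have hfun : ∀ d : ℕ, (fun i => ((b • v) i : A[X]).coeff d) =
          ∑ pq ∈ Finset.HasAntidiagonal.antidiagonal d,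
            (b : A[X]).coeff pq.1 • fun i => (v i : A[X]).coeff pq.2 := by
        intro d
        funext i
        rw [Finset.sum_apply]
        simp only [Pi.smul_apply, smul_eq_mul]
        show (((b • v) i : B) : A[X]).coeff d = _
        rw [Pi.smul_apply, smul_eq_mul, Subring.coe_mul, Polynomial.coeff_mul]
      constructor
      · intro d
        rw [hfun d, map_sum]
        refine Submodule.sum_mem _ fun pq _ => ?_
        rw [map_smul]
        exact Submodule.smul_mem _ _ (ih.1 pq.2)
      · rw [hfun (t + 1), map_sum]
        refine Submodule.sum_mem _ fun pq hpq => ?_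
        rw [map_smul]
        rcases Nat.eq_zero_or_pos pq.1 with h0 | hpos
        · have h2 : pq.2 = t + 1 := by
            have := Finset.HasAntidiagonal.mem_antidiagonal.mp hpq; omega
          rw [h2]
          exact Submodule.smul_mem _ _ ih.2
        · refine Submodule.subset_span ?_
          refine ⟨(b : A[X]).coeff pq.1, ?_, π fun i => (v i : A[X]).coeff pq.2,
            ih.1 pq.2, rfl⟩
          have h1 : pq.1 - 1 + 1 = pq.1 := by omega
          have h2 : (b : A[X]).coeff pq.1 ∈ powSet J 1 :=
            powSet_le_one J (pq.1 - 1) (by rw [h1]; exact b.2 pq.1)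
          exact h2
  -- L ≤ J • L
  have hle : L ≤ jsmul (J : Set A) (L : Submodule A M) := by
    intro l hl
    have hlt : l ∈ jadic J M (t + 1) := (iInf_le (fun n => jadic J M n) (t + 1)) hl
    rw [← jadic_map_surj J π hπ (t + 1)] at hlt
    obtain ⟨ξ, hξmem, rfl⟩ := hlt
    have hξ : ∀ i, ξ i ∈ powSet J (t + 1) := fun i =>
      jadic_pi_le J hJ k (t + 1) hξmem i (Set.mem_univ i)
    set v : Fin k → B := fun i => ⟨monomial (t + 1) (ξ i), monomial_mem_blowUp J hJ (hξ i)⟩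
      with hv
    have hvS : v ∈ S (t + 1) := ⟨t + 1, le_rfl, ξ, hξ, hl, fun i => rfl⟩
    have hvE : v ∈ E t := by
      rw [ht (t + 1) (Nat.le_succ t)]
      exact Submodule.subset_span hvS
    have h2 := (key v hvE).2
    have hfun : (fun i => (v i : A[X]).coeff (t + 1)) = ξ :=
      funext fun i => by
        show (monomial (t + 1) (ξ i) : A[X]).coeff (t + 1) = ξ i
        rw [Polynomial.coeff_monomial, if_pos rfl]
    rwa [hfun] at h2
  have hLfg : L.FG := IsNoetherian.noetherian L
  exact nakayama J hJ hjac L hLfg hle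

end KrullMain

/-- **Krull separation.** Let `A` be a ring and `J` a two-sided ideal of `A` such
that the blow-up ring `Bl_J(A)` is left Noetherian and `J` is contained in the Jacobson radical
of `A`. Then for every finitely generated left `A`-module `M` and every submodule `N ⊆ M` one
has `⋂_{n ≥ 0} (N + J^n M) = N`. (In particular, taking `N = 0`, every finitely generated left
`A`-module is separated in the `J`-adic topology, and every submodule of a finitely generated
left `A`-module is closed in the `J`-adic topology.) -/
theorem krull_separation {A : Type*} [Ring A] (J : Ideal A)
    (hJtwoSided : ∀ x ∈ J, ∀ a : A, x * a ∈ J)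
    (hbl : IsNoetherianRing (blowUp J hJtwoSided))
    (hjac : J ≤ Ideal.jacobson (⊥ : Ideal A))
    (M : Type*) [AddCommGroup M] [Module A M] [Module.Finite A M] (N : Submodule A M) :
    (⨅ n : ℕ, (N ⊔ jadic J M n)) = N := by
  classical
  haveI : Module.Finite A (M ⧸ N) :=
    Module.Finite.of_surjective N.mkQ (Submodule.mkQ_surjective N)
  have hbot := iInf_jadic_eq_bot J hJtwoSided hbl hjac (M ⧸ N)
  have hcomap : ∀ n : ℕ, N ⊔ jadic J M n = Submodule.comap N.mkQ (jadic J (M ⧸ N) n) := by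
    intro n
    rw [← jadic_map_surj J N.mkQ (Submodule.mkQ_surjective N) n, Submodule.comap_map_eq,
      Submodule.ker_mkQ, sup_comm]
  calc (⨅ n : ℕ, (N ⊔ jadic J M n))
      = ⨅ n : ℕ, Submodule.comap N.mkQ (jadic J (M ⧸ N) n) := by simp_rw [hcomap]
    _ = Submodule.comap N.mkQ (⨅ n : ℕ, jadic J (M ⧸ N) n) := by
        ext x; simp [Submodule.mem_iInf]
    _ = N := by rw [hbot, Submodule.comap_bot, Submodule.ker_mkQ]
end

section
/- Let A = ⊕_{n≥0} A_n be an ℕ-graded ring and h ∈ A a central homogeneous element of positive degree. Let M = ⊕_{n∈ℤ} M_n be a ℤ-graded (A,A)-bimodule such that: (a) M is generated as a bimodule by finitely many homogeneous elements m_1, …, m_k; and (b) am − ma ∈ hM for all a ∈ A and m ∈ M. Then M is generated as a left A-module by m_1, …, m_k; in particular M is finitely generated as a left A-module (and, symmetrically, as a right A-module). -/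
open DirectSum in
set_option synthInstance.maxHeartbeats 1000000 in
set_option maxHeartbeats 2000000 in

/-- Let `A = ⊕_{n≥0} 𝒜 n` be an `ℕ`-graded ring and `h ∈ A` a central
homogeneous element of positive degree. Let `M = ⊕_{n∈ℤ} ℳ n` be a `ℤ`-graded
`(A,A)`-bimodule generated as a bimodule by finitely many homogeneous elements `m 0, …,
m (k-1)` and such that `am - ma ∈ hM` for all `a ∈ A`, `m ∈ M`. Then `M` is generated as a
left `A`-module by `m 0, …, m (k-1)`; in particular `M` is finitely generated as a left
`A`-module. -/
theorem bimodule_finitelyGenerated_oneSided {A : Type*} [Ring A]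
    (𝒜 : ℕ → AddSubgroup A) (hAgr : DirectSum.IsInternal 𝒜) (hone : (1 : A) ∈ 𝒜 0)
    (hAmul : ∀ i j : ℕ, ∀ x ∈ 𝒜 i, ∀ y ∈ 𝒜 j, x * y ∈ 𝒜 (i + j))
    (h : A) (hcen : ∀ a : A, h * a = a * h)
    (d : ℕ) (hd : 0 < d) (hhd : h ∈ 𝒜 d)
    {M : Type*} [AddCommGroup M] [Module A M] [Module Aᵐᵒᵖ M] [SMulCommClass A Aᵐᵒᵖ M]
    (ℳ : ℤ → AddSubgroup M) (hMgr : DirectSum.IsInternal ℳ)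
    (hsmul : ∀ (i : ℕ) (n : ℤ) (p : ℕ), ∀ a ∈ 𝒜 i, ∀ x ∈ ℳ n, ∀ b ∈ 𝒜 p,
      a • (MulOpposite.op b • x) ∈ ℳ ((i : ℤ) + n + (p : ℤ)))
    (k : ℕ) (m : Fin k → M)
    (hhom : ∀ i : Fin k, ∃ n : ℤ, m i ∈ ℳ n)
    (hgen : AddSubgroup.closure
        {z : M | ∃ (i : Fin k) (a b : A), z = a • (MulOpposite.op b • m i)} = ⊤)
    (hcomm : ∀ (a : A) (x : M), ∃ z : M, a • x - MulOpposite.op a • x = h • z) :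
    Submodule.span A (Set.range m) = ⊤ := by
  classical
  set N := Submodule.span A (Set.range m) with hNdef
  -- the internal direct sum equivalence for M
  let eM : (⨁ n, ℳ n) ≃+ M := AddEquiv.ofBijective (DirectSum.coeAddMonoidHom ℳ) hMgr
  have heM : ∀ (n : ℤ) (x : ℳ n), eM (DirectSum.of (fun n => ℳ n) n x) = (x : M) := by
    intro n x
    exact DirectSum.coeAddMonoidHom_of ℳ n x
  -- the homogeneous projections
  let π : ℤ → M →+ M := fun n =>
    AddMonoidHom.mk' (fun x => ((eM.symm x) n : M)) (by
      intro x y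
      show ((eM.symm (x + y)) n : M) = ((eM.symm x) n : M) + ((eM.symm y) n : M)
      rw [map_add, DirectSum.add_apply, AddSubgroup.coe_add])
  have hπmem : ∀ (n : ℤ) (x : M), π n x ∈ ℳ n := fun n x => ((eM.symm x) n).2
  have hπhom : ∀ (n q : ℤ) (x : M), x ∈ ℳ q → π n x = if n = q then x else 0 := by
    intro n q x hx
    have hsymm : eM.symm x = DirectSum.of (fun n => ℳ n) q ⟨x, hx⟩ := by
      apply eM.injective
      rw [AddEquiv.apply_symm_apply, heM]
    show ((eM.symm x) n : M) = _
    rw [hsymm]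
    by_cases hnq : n = q
    · subst hnq
      rw [DirectSum.of_eq_same, if_pos rfl]
    · rw [DirectSum.of_eq_of_ne q n _ hnq, if_neg hnq]
      rfl
  have hπsum : ∀ x : M, x = ∑ n ∈ (eM.symm x).support, π n x := by
    intro x
    conv_lhs => rw [← eM.apply_symm_apply x, ← DirectSum.sum_support_of (eM.symm x)]
    rw [map_sum]
    refine Finset.sum_congr rfl fun n _ => ?_
    rw [heM]
    rfl
  have hπsupp : ∀ (n : ℤ) (x : M), n ∉ (eM.symm x).support → π n x = 0 := by
    intro n x hn
    show ((eM.symm x) n : M) = 0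
    rw [DFinsupp.notMem_support_iff.mp hn]
    rfl
  -- induction principle for A along homogeneous components
  have hAind : ∀ (C : A → Prop), C 0 → (∀ x y, C x → C y → C (x + y)) →
      (∀ (j : ℕ) (x : A), x ∈ 𝒜 j → C x) → ∀ a, C a := by
    intro C h0 hadd hhomog a
    obtain ⟨y, rfl⟩ := hAgr.surjective a
    induction y using DirectSum.induction_on with
    | zero => simpa using h0
    | of j x => rw [DirectSum.coeAddMonoidHom_of]; exact hhomog j x x.2
    | add x y hx hy => rw [map_add]; exact hadd _ _ hx hy
  -- degrees of the generators
  choose fn hfn using hhom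
  -- the homogeneous bimodule generators
  set S : Set M := {z | ∃ (i : Fin k) (j p : ℕ) (a b : A), a ∈ 𝒜 j ∧ b ∈ 𝒜 p ∧
      z = a • (MulOpposite.op b • m i)} with hSdef
  have hTtop : AddSubgroup.closure S = ⊤ := by
    rw [eq_top_iff, ← hgen, AddSubgroup.closure_le]
    rintro z ⟨i, a, b, rfl⟩
    have step1 : ∀ (j : ℕ) (a : A), a ∈ 𝒜 j → ∀ b : A,
        a • (MulOpposite.op b • m i) ∈ AddSubgroup.closure S := by
      intro j a ha b
      refine hAind (fun b => a • (MulOpposite.op b • m i) ∈ AddSubgroup.closure S)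
        ?_ ?_ ?_ b
      · simp only [MulOpposite.op_zero, zero_smul, smul_zero]
        exact zero_mem _
      · intro x y hx hy
        simp only [MulOpposite.op_add, add_smul, smul_add]
        exact add_mem hx hy
      · intro p b hb
        exact AddSubgroup.subset_closure ⟨i, j, p, a, b, ha, hb, rfl⟩
    refine hAind (fun a => a • (MulOpposite.op b • m i) ∈ AddSubgroup.closure S) ?_ ?_ ?_ a
    · simp only [zero_smul]; exact zero_mem _
    · intro x y hx hy
      simp only [add_smul]
      exact add_mem hx hy
    · intro j x hx
      exact step1 j x hx b
  -- key lemma: if h • w is homogeneous of degree q then h • w = h • (π (q - d) w)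
  have hkey : ∀ (w : M) (q : ℤ), h • w ∈ ℳ q → h • w = h • (π (q - d) w) := by
    intro w q hw
    have h1 : h • w = ∑ t ∈ (eM.symm w).support, h • π t w := by
      conv_lhs => rw [hπsum w]
      rw [Finset.smul_sum]
    have h2 : ∀ t : ℤ, h • π t w ∈ ℳ ((d : ℤ) + t) := by
      intro t
      have := hsmul d t 0 h hhd (π t w) (hπmem t w) 1 hone
      simpa using this
    have h3 : π q (h • w) = h • w := by rw [hπhom q q _ hw, if_pos rfl]
    have h4 : π q (h • w) = if q - d ∈ (eM.symm w).support then h • π (q - d) w else 0 := by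
      rw [h1, map_sum]
      rw [Finset.sum_congr rfl (fun t _ => hπhom q ((d : ℤ) + t) _ (h2 t))]
      have : ∀ t : ℤ, (if q = (d : ℤ) + t then h • π t w else 0)
          = if t = q - (d : ℤ) then h • π t w else 0 := by
        intro t
        by_cases ht : t = q - d
        · rw [if_pos (by omega), if_pos ht]
        · rw [if_neg (by omega), if_neg ht]
      rw [Finset.sum_congr rfl (fun t _ => this t)]
      exact Finset.sum_ite_eq' _ _ _
    by_cases hmem : q - (d : ℤ) ∈ (eM.symm w).support
    · rw [← h3, h4, if_pos hmem]
    · rw [hπsupp _ _ hmem, smul_zero, ← h3, h4, if_neg hmem]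
  -- main induction on the degree
  have main : ∀ (t : ℕ) (n : ℤ), (∀ i : Fin k, n < fn i + t) → ∀ x ∈ ℳ n, x ∈ N := by
    intro t
    induction t with
    | zero =>
      intro n hlt x hx
      have hall : ∀ y : M, π n y ∈ N := by
        intro y
        have hy : y ∈ AddSubgroup.closure S := hTtop ▸ AddSubgroup.mem_top y
        refine AddSubgroup.closure_induction ?_ ?_ ?_ ?_ hy
        · rintro z ⟨i, j, p, a, b, ha, hb, rfl⟩
          have hz : a • (MulOpposite.op b • m i) ∈ ℳ ((j : ℤ) + fn i + p) :=
            hsmul j (fn i) p a ha (m i) (hfn i) b hb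
          rw [hπhom n _ _ hz, if_neg (by have := hlt i; omega)]
          exact zero_mem _
        · rw [map_zero]; exact zero_mem _
        · intro x y _ _ hx hy
          rw [map_add]; exact add_mem hx hy
        · intro x _ hx
          rw [map_neg]; exact neg_mem hx
      have := hall x
      rwa [hπhom n n x hx, if_pos rfl] at this
    | succ t ih =>
      intro n hlt x hx
      have hall : ∀ y : M, π n y ∈ N := by
        intro y
        have hy : y ∈ AddSubgroup.closure S := hTtop ▸ AddSubgroup.mem_top y
        refine AddSubgroup.closure_induction ?_ ?_ ?_ ?_ hy
        · rintro z ⟨i, j, p, a, b, ha, hb, rfl⟩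
          have hz : a • (MulOpposite.op b • m i) ∈ ℳ ((j : ℤ) + fn i + p) :=
            hsmul j (fn i) p a ha (m i) (hfn i) b hb
          by_cases hdeg : n = (j : ℤ) + fn i + p
          · rw [hπhom n _ _ hz, if_pos hdeg]
            -- the commutator trick
            obtain ⟨w, hw⟩ := hcomm b (m i)
            have hbm : b • m i ∈ ℳ ((p : ℤ) + fn i) := by
              have := hsmul p (fn i) 0 b hb (m i) (hfn i) 1 hone
              simpa using this
            have hobm : MulOpposite.op b • m i ∈ ℳ ((p : ℤ) + fn i) := by
              have := hsmul 0 (fn i) p 1 hone (m i) (hfn i) b hb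
              have h0 : ((0 : ℕ) : ℤ) + fn i + p = (p : ℤ) + fn i := by push_cast; ring
              rw [h0] at this
              simpa using this
            have hhw : h • w ∈ ℳ ((p : ℤ) + fn i) := hw ▸ sub_mem hbm hobm
            have hw2 : h • w = h • (π ((p : ℤ) + fn i - d) w) := hkey w _ hhw
            have hrepr : a • (MulOpposite.op b • m i)
                = (a * b) • m i - h • (a • π ((p : ℤ) + fn i - d) w) := by
              have hob : MulOpposite.op b • m i
                  = b • m i - h • (π ((p : ℤ) + fn i - d) w) := by
                rw [← hw2, ← hw]; abel
              rw [hob, smul_sub, smul_smul, smul_smul, smul_smul, ← hcen a]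
            have hπw : a • π ((p : ℤ) + fn i - d) w ∈ ℳ (n - d) := by
              have := hsmul j ((p : ℤ) + fn i - d) 0 a ha _
                (hπmem ((p : ℤ) + fn i - d) w) 1 hone
              have h0 : (j : ℤ) + ((p : ℤ) + fn i - d) + (0 : ℕ) = n - d := by
                push_cast; omega
              rw [h0] at this
              simpa using this
            have hmem : a • π ((p : ℤ) + fn i - d) w ∈ N :=
              ih (n - d) (fun i' => by have := hlt i'; omega) _ hπw
            rw [hrepr]
            exact sub_mem
              (Submodule.smul_mem _ _ (Submodule.subset_span ⟨i, rfl⟩))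
              (Submodule.smul_mem _ _ hmem)
          · rw [hπhom n _ _ hz, if_neg hdeg]
            exact zero_mem _
        · rw [map_zero]; exact zero_mem _
        · intro x y _ _ hx hy
          rw [map_add]; exact add_mem hx hy
        · intro x _ hx
          rw [map_neg]; exact neg_mem hx
      have := hall x
      rwa [hπhom n n x hx, if_pos rfl] at this
  -- conclude
  rw [eq_top_iff]
  rintro x -
  rw [hπsum x]
  refine Submodule.sum_mem _ fun n _ => ?_
  set t : ℕ := (Finset.univ.sup fun i : Fin k => (n - fn i).toNat) + 1 with ht
  refine main t n (fun i => ?_) (π n x) (hπmem n x)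
  have h1 : n - fn i ≤ ((n - fn i).toNat : ℤ) := Int.self_le_toNat _
  have h2 : (n - fn i).toNat ≤ Finset.univ.sup fun i : Fin k => (n - fn i).toNat :=
    Finset.le_sup (f := fun i : Fin k => (n - fn i).toNat) (Finset.mem_univ i)
  omega
end
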